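/- arXiv:2111.05758 — 2 statements merged into one kernel-verified Lean document; each statement's English description precedes it below -/
import Mathlib

section
/- For every n ≥ 1, the bivariate cyclic Eulerian polynomial satisfies A_n^{(c)}(x,y) = n · A_{n-1}(x,y), where A_n^{(c)}(x,y) = Σ_{π ∈ S_n} x^{cdes(π)} y^{casc(π)} and A_{n-1}(x,y) = Σ_{π ∈ S_{n-1}} x^{des(π)} y^{asc(π)}. -/
open scoped Classical
open Finset MvPolynomial

/-- The word `w` padded with a `0` at the front and at the end; `pad w i` is the
`i`-th letter of `0, w_1, …, w_M, 0` (so `pad w 0 = 0 = pad w (M+1)`). -/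
def pad (w : List ℕ) : ℕ → ℕ := fun i => (0 :: (w ++ [0])).getD i 0

/-- number of descents (indices `0 ≤ i ≤ M` with `π_i > π_{i+1}`, convention `π_0 = π_{M+1} = 0`). -/
def desN (w : List ℕ) : ℕ :=
  ((Finset.range (w.length + 1)).filter fun i => pad w (i + 1) < pad w i).card

/-- number of ascents. -/
def ascN (w : List ℕ) : ℕ :=
  ((Finset.range (w.length + 1)).filter fun i => pad w i < pad w (i + 1)).card

/-- number of plateaus. -/
def platN (w : List ℕ) : ℕ :=
  ((Finset.range (w.length + 1)).filter fun i => pad w i = pad w (i + 1)).card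

/-- number of double descents: indices `1 ≤ i ≤ M` with `π_{i-1} > π_i > π_{i+1}`. -/
def ddN (w : List ℕ) : ℕ :=
  ((Finset.range w.length).filter fun i =>
    pad w (i + 1) < pad w i ∧ pad w (i + 2) < pad w (i + 1)).card

/-- number of cyclic descents: indices `1 ≤ i ≤ M` with `π_i > π_{i+1}`, cyclic convention
`π_{M+1} = π_1`. -/
def cdesN (w : List ℕ) : ℕ :=
  ((Finset.range w.length).filter fun i =>
    w.getD ((i + 1) % w.length) 0 < w.getD i 0).card

/-- number of cyclic ascents. -/
def cascN (w : List ℕ) : ℕ :=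
  ((Finset.range w.length).filter fun i =>
    w.getD i 0 < w.getD ((i + 1) % w.length) 0).card

/-- The permutations of `[n] = {1,…,n}`, as words (lists). -/
def Sn (n : ℕ) : Finset (List ℕ) := (List.range' 1 n).permutations.toFinset

/-- quasi-Stirling: no four positions `i<j<k<l` with `w_i = w_k`, `w_j = w_l`, `w_i ≠ w_j`
(no subword order-isomorphic to 1212 or 2121). -/
def IsQS (w : List ℕ) : Prop :=
  ¬ ∃ i j k l, i < j ∧ j < k ∧ k < l ∧ l < w.length ∧
      w.getD i 0 = w.getD k 0 ∧ w.getD j 0 = w.getD l 0 ∧ w.getD i 0 ≠ w.getD j 0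

/-- The multiset `{1^{m 1}, …, n^{m n}}`, written as a (weakly increasing) list. -/
def msetList (n : ℕ) (m : ℕ → ℕ) : List ℕ :=
  (List.range n).flatMap fun i => List.replicate (m (i + 1)) (i + 1)

/-- The finite set of quasi-Stirling multipermutations of `{1^{m 1}, …, n^{m n}}`. -/
noncomputable def QS (n : ℕ) (m : ℕ → ℕ) : Finset (List ℕ) :=
  (msetList n m).permutations.toFinset.filter IsQS

/-- `p` is a position of `w` holding a non-leftmost copy of its value. -/
def nonFirstPos (w : List ℕ) (p : ℕ) : Prop :=
  p < w.length ∧ ∃ q, q < p ∧ w.getD q 0 = w.getD p 0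

/-- Rooted quasi-Stirling multipermutations: pairs `(π, r)` where `π` is quasi-Stirling and
either `r = none` (rooted at `0`) or `r = some p` with `p` a position of a non-first copy. -/
noncomputable def RootedQS (n : ℕ) (m : ℕ → ℕ) : Finset (List ℕ × Option ℕ) :=
  ((QS n m) ×ˢ insert none ((Finset.range (msetList n m).length).image some)).filter
    fun P => ∀ r, P.2 = some r → nonFirstPos P.1 r

/-- Sum of the block sizes of the blocks preceding block `i`. -/
def offsetC {k : ℕ} (c : Fin k → ℕ) (i : Fin k) : ℕ :=
  ∑ j ∈ Finset.univ.filter (fun j : Fin k => (j : ℕ) < (i : ℕ)), c j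

/-- The `i`-th block of the ordered set partition encoded by the word `w` together with the
composition `c` of block sizes. -/
def blockOf (k : ℕ) (w : List ℕ) (c : Fin k → ℕ) (i : Fin k) : List ℕ :=
  (w.drop (offsetC c i)).take (c i)

/-- `B_{n,k}`: ordered set partitions of `[n]` into `k` possibly empty blocks, each block
written as a permutation of its elements; encoded as a pair `(w, c)` of a permutation word
`w` of `[n]` and a composition `c` of `n` into `k` nonnegative parts (the block sizes). -/
def Bnk (n k : ℕ) : Finset (List ℕ × (Fin k → ℕ)) :=
  Sn n ×ˢ Finset.Nat.antidiagonalTuple k n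

/-- blockwise descent number of an ordered set partition. -/
def desB {k : ℕ} (P : List ℕ × (Fin k → ℕ)) : ℕ := ∑ i, desN (blockOf k P.1 P.2 i)

/-- blockwise ascent number of an ordered set partition. -/
def ascB {k : ℕ} (P : List ℕ × (Fin k → ℕ)) : ℕ := ∑ i, ascN (blockOf k P.1 P.2 i)

/-- number of empty blocks of an ordered set partition. -/
def empB {k : ℕ} (P : List ℕ × (Fin k → ℕ)) : ℕ :=
  (Finset.univ.filter fun i => P.2 i = 0).card

/-- `A(x,y,u) = Σ_{n ≥ 0} A_n(x,y) uⁿ/n!`, power series in `u` with coefficients in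
`ℚ[x,y,z] = MvPolynomial (Fin 3) ℚ` (`x = X 0`, `y = X 1`, `z = X 2`). -/
noncomputable def AEGF3 : PowerSeries (MvPolynomial (Fin 3) ℚ) :=
  PowerSeries.mk fun j => (j.factorial : ℚ)⁻¹ •
    ∑ w ∈ Sn j, (X 0 : MvPolynomial (Fin 3) ℚ) ^ desN w * (X 1) ^ ascN w

/-- The global index of the `j`-th gap of block `i` (each block `i` has `c i + 1` gaps). -/
def gapIdx {k : ℕ} (c : Fin k → ℕ) (i : Fin k) (j : ℕ) : ℕ :=
  (∑ j' ∈ Finset.univ.filter (fun j' : Fin k => (j' : ℕ) < (i : ℕ)), (c j' + 1)) + j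

/-- A bar placement `b` (bars per gap, `n + k` gaps in total) is good for the ordered set
partition `(w, c) ∈ B_{n,k}` if every descent gap of every block receives at least one bar. -/
def GoodBars (n k : ℕ) (w : List ℕ) (c : Fin k → ℕ) (b : Fin (n + k) → ℕ) : Prop :=
  ∀ i : Fin k, ∀ j ≤ c i,
    pad (blockOf k w c i) (j + 1) < pad (blockOf k w c i) j →
      ∀ g : Fin (n + k), (g : ℕ) = gapIdx c i j → 1 ≤ b g

/-- `π_i` (1-indexed, `pad w i`) is the last copy of its value in `w`. -/
def lastCopy (w : List ℕ) (i : ℕ) : Prop :=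
  ∀ j, i < j → j ≤ w.length → pad w j ≠ pad w i

/-- `π_p` is the first copy of its value; by convention the boundary entry `π_{M+1} = 0`
is regarded as a second (non-first) copy of `0`. -/
def firstCopy (w : List ℕ) (p : ℕ) : Prop :=
  p ≤ w.length ∧ ∀ j, 1 ≤ j → j < p → pad w j ≠ pad w p

/-- sibling descent of type I at `i`: `π_{i+1}` is a first copy and `π_i > π_{i+1}`. -/
def TypeI (w : List ℕ) (i : ℕ) : Prop :=
  firstCopy w (i + 1) ∧ pad w (i + 1) < pad w i

/-- `i` is a sibling descent: `π_i` is a last copy, and either type I holds at `i` or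
`π_{i+1}` is a non-first copy (type II). -/
def SDes (w : List ℕ) (i : ℕ) : Prop :=
  lastCopy w i ∧ (TypeI w i ∨ ¬ firstCopy w (i + 1))

/-- number of sibling descents (indices `1 ≤ i ≤ M`). -/
noncomputable def sdN (w : List ℕ) : ℕ :=
  ((Finset.Icc 1 w.length).filter (SDes w)).card

/-- number of double sibling descents: indices `2 ≤ i ≤ M` such that both `i-1` and `i`
are sibling descents and `i-1` is of type I. -/
noncomputable def dsdN (w : List ℕ) : ℕ :=
  ((Finset.Icc 2 w.length).filter fun i =>
    SDes w (i - 1) ∧ SDes w i ∧ TypeI w (i - 1)).card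

lemma add_mod_cancel' {L x c : ℕ} (hc : c % L = 0) : (x + c) % L = x % L := by
  rw [Nat.add_mod, hc, Nat.add_zero, Nat.mod_mod_of_dvd x (dvd_refl L)]

lemma mod_helper {L i a b : ℕ} (hi : i < L) (hab : (a + b) % L = 0) :
    ((i + a) % L + b) % L = i := by
  rw [Nat.mod_add_mod, Nat.add_assoc, add_mod_cancel' hab, Nat.mod_eq_of_lt hi]

lemma key_mod {L k : ℕ} (hL : 0 < L) : (k + (L - k % L)) % L = 0 := by
  have h1 : k % L < L := Nat.mod_lt _ hL
  have h2 : k % L + L * (k / L) = k := Nat.mod_add_div k L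
  have h3 : k + (L - k % L) = L * (k / L + 1) := by
    have : L * (k / L + 1) = L * (k / L) + L := by ring
    omega
  rw [h3, Nat.mul_mod_right]

lemma rot_card (R : ℕ → ℕ → Prop) [∀ a b, Decidable (R a b)] (l : List ℕ) (k : ℕ) :
    (((range (l.rotate k).length)).filter fun i =>
        R ((l.rotate k).getD ((i + 1) % (l.rotate k).length) 0) ((l.rotate k).getD i 0)).card =
    ((range l.length).filter fun i =>
        R (l.getD ((i + 1) % l.length) 0) (l.getD i 0)).card := by
  rcases Nat.eq_zero_or_pos l.length with hL | hL
  · simp [List.length_rotate, hL]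
  set L := l.length with hLdef
  have hlen : (l.rotate k).length = L := List.length_rotate l k
  have hget : ∀ i, i < L → (l.rotate k).getD i 0 = l.getD ((i + k) % L) 0 := by
    intro i hi
    rw [List.getD_eq_getElem _ _ (by rw [hlen]; exact hi), List.getElem_rotate,
      List.getD_eq_getElem _ _ (Nat.mod_lt _ hL)]
  have hab : (k + (L - k % L)) % L = 0 := key_mod hL
  have hba : ((L - k % L) + k) % L = 0 := by rwa [Nat.add_comm]
  rw [hlen]
  apply Finset.card_nbij' (fun i => (i + k) % L) (fun i => (i + (L - k % L)) % L)
  · intro i hi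
    simp only [Finset.mem_coe, mem_filter, mem_range] at hi ⊢
    obtain ⟨hi1, hi2⟩ := hi
    refine ⟨Nat.mod_lt _ hL, ?_⟩
    rw [hget i hi1, hget _ (Nat.mod_lt _ hL)] at hi2
    rw [Nat.mod_add_mod (i + 1) L k] at hi2
    rw [Nat.mod_add_mod (i + k) L 1]
    rwa [show i + 1 + k = i + k + 1 by ring] at hi2
  · intro j hj
    simp only [Finset.mem_coe, mem_filter, mem_range] at hj ⊢
    obtain ⟨hj1, hj2⟩ := hj
    refine ⟨Nat.mod_lt _ hL, ?_⟩
    rw [hget _ (Nat.mod_lt _ hL), hget _ (Nat.mod_lt _ hL)]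
    rw [mod_helper hj1 hba, Nat.mod_add_mod (j + (L - k % L)) L 1,
      Nat.mod_add_mod (j + (L - k % L) + 1) L k,
      show j + (L - k % L) + 1 + k = j + 1 + ((L - k % L) + k) by ring,
      add_mod_cancel' hba]
    exact hj2
  · intro i hi
    simp only [Finset.mem_coe, mem_filter, mem_range] at hi
    exact mod_helper hi.1 hab
  · intro i hi
    simp only [Finset.mem_coe, mem_filter, mem_range] at hi
    exact mod_helper hi.1 hba

lemma pad_zero (w : List ℕ) : pad w 0 = 0 := rfl

lemma pad_succ_lt (w : List ℕ) {i : ℕ} (h : i < w.length) : pad w (i + 1) = w.getD i 0 := by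
  show (w ++ [0]).getD i 0 = w.getD i 0
  exact List.getD_append _ _ _ _ h

lemma pad_succ_ge (w : List ℕ) {i : ℕ} (h : w.length ≤ i) : pad w (i + 1) = 0 := by
  show (w ++ [0]).getD i 0 = 0
  rw [List.getD_append_right _ _ _ _ h]
  rcases Nat.eq_zero_or_pos (i - w.length) with h' | h'
  · rw [h']; rfl
  · exact List.getD_eq_default _ _ (by simp only [List.length_cons, List.length_nil]; omega)

lemma concat_getD_lt {n : ℕ} (w : List ℕ) {i : ℕ} (h : i < w.length) :
    (w ++ [n]).getD i 0 = w.getD i 0 := List.getD_append _ _ _ _ h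

lemma concat_getD_len {n : ℕ} (w : List ℕ) : (w ++ [n]).getD w.length 0 = n := by
  rw [List.getD_append_right _ _ _ _ le_rfl, Nat.sub_self]; rfl

lemma entry_bound {n : ℕ} {w : List ℕ} (hw : ∀ x ∈ w, 1 ≤ x ∧ x < n) {i : ℕ}
    (h : i < w.length) : 1 ≤ w.getD i 0 ∧ w.getD i 0 < n := by
  rw [List.getD_eq_getElem _ _ h]
  exact hw _ (List.getElem_mem h)

lemma cdesN_concat {n : ℕ} (w : List ℕ) (hw : ∀ x ∈ w, 1 ≤ x ∧ x < n) :
    cdesN (w ++ [n]) = desN w := by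
  set m := w.length with hm
  have hlen : (w ++ [n]).length = m + 1 := by simp [hm]
  unfold cdesN desN
  rw [hlen]
  apply Finset.card_nbij' (fun i => if i = m then m else i + 1)
      (fun j => if j = m then m else j - 1)
  · intro i hi
    simp only [Finset.mem_coe, mem_filter, mem_range] at hi ⊢
    obtain ⟨hi1, hi2⟩ := hi
    by_cases him : i = m
    · subst him
      have hm1 : 1 ≤ m := by
        by_contra h
        have hm0 : m = 0 := by omega
        rw [hm0] at hi2
        simp at hi2
      rw [if_pos rfl]
      refine ⟨by omega, ?_⟩
      rw [pad_succ_ge w le_rfl, show m = (m - 1) + 1 by omega, pad_succ_lt w (by omega)]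
      exact (entry_bound hw (by omega)).1
    · -- i < m
      have hi1' : i < m := by omega
      rw [if_neg him]
      have h1 : (i + 1) % (m + 1) = i + 1 := Nat.mod_eq_of_lt (by omega)
      rw [h1, concat_getD_lt w hi1'] at hi2
      -- rule out i + 1 = m
      have hi2' : i + 1 < m := by
        by_contra h
        have : i + 1 = m := by omega
        rw [this, concat_getD_len] at hi2
        exact absurd hi2 (by exact Nat.not_lt.2 (entry_bound hw hi1').2.le)
      rw [concat_getD_lt w hi2'] at hi2
      refine ⟨by omega, ?_⟩
      rw [pad_succ_lt w hi2', pad_succ_lt w hi1']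
      exact hi2
  · intro j hj
    simp only [Finset.mem_coe, mem_filter, mem_range] at hj ⊢
    obtain ⟨hj1, hj2⟩ := hj
    have hj0 : j ≠ 0 := by
      intro h; rw [h, pad_zero] at hj2; omega
    by_cases hjm : j = m
    · subst hjm
      have hm1 : 1 ≤ m := by omega
      rw [if_pos rfl]
      refine ⟨by omega, ?_⟩
      rw [Nat.mod_self, concat_getD_len]
      have h0 : (w ++ [n]).getD 0 0 = w.getD 0 0 := concat_getD_lt w (by omega)
      rw [h0]
      exact (entry_bound hw (by omega)).2
    · have hjm' : j < m := by omega
      rw [if_neg hjm]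
      refine ⟨by omega, ?_⟩
      rw [pad_succ_lt w hjm', show j = (j - 1) + 1 by omega, pad_succ_lt w (by omega)] at hj2
      have e1 : (j - 1 + 1) % (m + 1) = j := by
        rw [show j - 1 + 1 = j by omega]; exact Nat.mod_eq_of_lt (by omega)
      rw [e1, concat_getD_lt w hjm', concat_getD_lt w (by omega : j - 1 < m)]
      rw [show j - 1 + 1 = j by omega] at hj2
      exact hj2
  · intro i hi
    simp only [Finset.mem_coe, mem_filter, mem_range] at hi
    obtain ⟨hi1, hi2⟩ := hi
    by_cases him : i = m
    · simp [him]
    · dsimp only; rw [if_neg him]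
      have hi1' : i < m := by omega
      have h1 : (i + 1) % (m + 1) = i + 1 := Nat.mod_eq_of_lt (by omega)
      rw [h1, concat_getD_lt w hi1'] at hi2
      have hi2' : i + 1 ≠ m := by
        intro h
        rw [h, concat_getD_len] at hi2
        exact absurd hi2 (Nat.not_lt.2 (entry_bound hw hi1').2.le)
      rw [if_neg hi2']
      omega
  · intro j hj
    simp only [Finset.mem_coe, mem_filter, mem_range] at hj
    obtain ⟨hj1, hj2⟩ := hj
    have hj0 : j ≠ 0 := by
      intro h; rw [h, pad_zero] at hj2; omega
    by_cases hjm : j = m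
    · simp [hjm]
    · dsimp only; rw [if_neg hjm, if_neg (by omega : j - 1 ≠ m)]
      omega

lemma cascN_concat {n : ℕ} (w : List ℕ) (hw : ∀ x ∈ w, 1 ≤ x ∧ x < n) :
    cascN (w ++ [n]) = ascN w := by
  set m := w.length with hm
  have hlen : (w ++ [n]).length = m + 1 := by simp [hm]
  unfold cascN ascN
  rw [hlen]
  have hrule : ∀ i, i < m + 1 →
      ((w ++ [n]).getD i 0 < (w ++ [n]).getD ((i + 1) % (m + 1)) 0) → i < m := by
    intro i hi1 hi2
    by_contra h
    have him : i = m := by omega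
    rw [him, Nat.mod_self, concat_getD_len] at hi2
    rcases Nat.eq_zero_or_pos m with h0 | h0
    · have : (w ++ [n]).getD 0 0 = n := by
        have := concat_getD_len (n := n) w
        rwa [← hm, h0] at this
      rw [this] at hi2
      omega
    · rw [concat_getD_lt w (by omega)] at hi2
      exact absurd hi2 (Nat.not_lt.2 (entry_bound hw (by omega)).2.le)
  have hruleQ : ∀ j, j < m + 1 → (pad w j < pad w (j + 1)) → j < m := by
    intro j hj1 hj2
    by_contra h
    have : j = m := by omega
    rw [this, pad_succ_ge w le_rfl] at hj2
    omega
  apply Finset.card_nbij' (fun i => if i = m - 1 then 0 else i + 1)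
      (fun j => if j = 0 then m - 1 else j - 1)
  · intro i hi
    simp only [Finset.mem_coe, mem_filter, mem_range] at hi ⊢
    obtain ⟨hi1, hi2⟩ := hi
    have hi1' : i < m := hrule i hi1 hi2
    have h1 : (i + 1) % (m + 1) = i + 1 := Nat.mod_eq_of_lt (by omega)
    rw [h1, concat_getD_lt w hi1'] at hi2
    by_cases him : i = m - 1
    · rw [if_pos him]
      refine ⟨by omega, ?_⟩
      rw [pad_zero, pad_succ_lt w (by omega : 0 < m)]
      exact (entry_bound hw (by omega : 0 < m)).1
    · rw [if_neg him]
      have hi2' : i + 1 < m := by omega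
      rw [concat_getD_lt w hi2'] at hi2
      refine ⟨by omega, ?_⟩
      rw [pad_succ_lt w hi1', pad_succ_lt w hi2']
      exact hi2
  · intro j hj
    simp only [Finset.mem_coe, mem_filter, mem_range] at hj ⊢
    obtain ⟨hj1, hj2⟩ := hj
    have hj1' : j < m := hruleQ j hj1 hj2
    by_cases hj0 : j = 0
    · rw [if_pos hj0]
      refine ⟨by omega, ?_⟩
      have e1 : (m - 1 + 1) % (m + 1) = m := by
        rw [show m - 1 + 1 = m by omega]; exact Nat.mod_eq_of_lt (by omega)
      rw [e1, concat_getD_len, concat_getD_lt w (by omega : m - 1 < m)]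
      exact (entry_bound hw (by omega : m - 1 < m)).2
    · rw [if_neg hj0]
      refine ⟨by omega, ?_⟩
      rw [show j = (j - 1) + 1 by omega, pad_succ_lt w (by omega : j - 1 < m)] at hj2
      rw [show j - 1 + 1 + 1 = j + 1 by omega, pad_succ_lt w hj1'] at hj2
      have e1 : (j - 1 + 1) % (m + 1) = j := by
        rw [show j - 1 + 1 = j by omega]; exact Nat.mod_eq_of_lt (by omega)
      rw [e1, concat_getD_lt w (by omega : j - 1 < m), concat_getD_lt w hj1']
      exact hj2
  · intro i hi
    simp only [Finset.mem_coe, mem_filter, mem_range] at hi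
    obtain ⟨hi1, hi2⟩ := hi
    have hi1' : i < m := hrule i hi1 hi2
    by_cases him : i = m - 1
    · dsimp only; rw [if_pos him, if_pos rfl]; omega
    · dsimp only; rw [if_neg him, if_neg (by omega : ¬ i + 1 = 0)]
      omega
  · intro j hj
    simp only [Finset.mem_coe, mem_filter, mem_range] at hj
    obtain ⟨hj1, hj2⟩ := hj
    have hj1' : j < m := hruleQ j hj1 hj2
    by_cases hj0 : j = 0
    · dsimp only; rw [if_pos hj0, if_pos rfl]
      omega
    · dsimp only; rw [if_neg hj0, if_neg (by omega : ¬ j - 1 = m - 1)]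
      omega

lemma indexOf_eq_of {a : ℕ} : ∀ {l : List ℕ} {m : ℕ}, m < l.length → l.getD m 0 = a →
    (∀ j, j < m → l.getD j 0 ≠ a) → l.idxOf a = m := by
  intro l
  induction l with
  | nil => intro m hm; simp at hm
  | cons b t ih =>
    intro m hm hg hmin
    cases m with
    | zero =>
      have hb : b = a := hg
      simp [hb]
    | succ m' =>
      have hb : b ≠ a := by
        have := hmin 0 (by omega)
        simpa using this
      rw [List.idxOf_cons_ne _ hb]
      have : t.idxOf a = m' := by
        apply ih (by simpa using hm) (by simpa using hg)
        intro j hj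
        have := hmin (j + 1) (by omega)
        simpa using this
      omega

lemma getD_rotate (l : List ℕ) (k i : ℕ) (hi : i < l.length) :
    (l.rotate k).getD i 0 = l.getD ((i + k) % l.length) 0 := by
  rw [List.getD_eq_getElem _ _ (by rw [List.length_rotate]; exact hi), List.getElem_rotate,
    List.getD_eq_getElem _ _ (Nat.mod_lt _ (by omega))]

lemma mem_Sn {n : ℕ} {w : List ℕ} : w ∈ Sn n ↔ w.Perm (List.range' 1 n) := by
  simp [Sn, List.mem_permutations]

lemma range'_split (n : ℕ) (hn : 1 ≤ n) :
    List.range' 1 n = List.range' 1 (n - 1) ++ [n] := by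
  have := List.range'_1_concat (s := 1) (n := n - 1)
  rw [show n - 1 + 1 = n by omega, show 1 + (n - 1) = n by omega] at this
  exact this

lemma Sn_facts {n : ℕ} {w : List ℕ} (hw : w ∈ Sn (n - 1)) (hn : 1 ≤ n) :
    w.length = n - 1 ∧ (∀ x ∈ w, 1 ≤ x ∧ x < n) := by
  have hperm := mem_Sn.1 hw
  constructor
  · rw [hperm.length_eq, List.length_range']
  · intro x hx
    have := hperm.mem_iff.1 hx
    rw [List.mem_range'_1] at this
    omega


lemma cdesN_rotate (l : List ℕ) (k : ℕ) : cdesN (l.rotate k) = cdesN l :=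
  rot_card (fun a b => a < b) l k

lemma cascN_rotate (l : List ℕ) (k : ℕ) : cascN (l.rotate k) = cascN l :=
  rot_card (fun a b => b < a) l k

lemma Sn_rot_facts {n : ℕ} (hn : 1 ≤ n) {π : List ℕ} (hπ : π ∈ Sn n) :
    π.length = n ∧ π.idxOf n < n ∧
      (π.rotate (π.idxOf n + 1)).dropLast ++ [n] = π.rotate (π.idxOf n + 1) := by
  have hperm := mem_Sn.1 hπ
  have hπlen : π.length = n := by rw [hperm.length_eq, List.length_range']
  have hmem : n ∈ π := hperm.mem_iff.2 (List.mem_range'_1.2 ⟨hn, by omega⟩)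
  have hp : π.idxOf n < n := by
    have := (List.idxOf_lt_length_iff (a := n) (l := π)).2 hmem
    omega
  refine ⟨hπlen, hp, ?_⟩
  set p := π.idxOf n with hpdef
  set w' := π.rotate (p + 1) with hw'def
  have hw'len : w'.length = n := by rw [hw'def, List.length_rotate, hπlen]
  have hlast : w'.getD (n - 1) 0 = n := by
    rw [hw'def, getD_rotate π (p + 1) (n - 1) (by omega), hπlen,
      show n - 1 + (p + 1) = n + p by omega, Nat.add_mod_left, Nat.mod_eq_of_lt hp,
      List.getD_eq_getElem _ _ (by omega)]
    exact List.getElem_idxOf (by omega)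
  have hne : w' ≠ [] := by
    intro h; rw [h] at hw'len; simp at hw'len; omega
  have hL : w'.getLast hne = n := by
    rw [List.getLast_eq_getElem, ← List.getD_eq_getElem w' 0 (by omega), hw'len]
    exact hlast
  have := List.dropLast_concat_getLast hne
  rw [hL] at this
  exact this

/-- `A_n^{(c)}(x,y) = n · A_{n-1}(x,y)`. -/
theorem stmt1 (n : ℕ) (hn : 1 ≤ n) :
    (∑ w ∈ Sn n, (X 0 : MvPolynomial (Fin 2) ℚ) ^ cdesN w * (X 1) ^ cascN w) =
      n • ∑ w ∈ Sn (n - 1), (X 0 : MvPolynomial (Fin 2) ℚ) ^ desN w * (X 1) ^ ascN w := by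
  have key : ∑ p ∈ (Finset.range n) ×ˢ Sn (n - 1),
      ((X 0 : MvPolynomial (Fin 2) ℚ) ^ desN p.2 * (X 1) ^ ascN p.2) =
      ∑ w ∈ Sn n, (X 0 : MvPolynomial (Fin 2) ℚ) ^ cdesN w * (X 1) ^ cascN w := by
    apply Finset.sum_nbij' (fun p => (p.2 ++ [n]).rotate p.1)
      (fun π => (n - (π.idxOf n + 1), (π.rotate (π.idxOf n + 1)).dropLast))
    · rintro ⟨k, w⟩ hkw
      simp only [Finset.mem_product, Finset.mem_range] at hkw
      obtain ⟨hwlen, hw⟩ := Sn_facts hkw.2 hn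
      rw [mem_Sn]
      refine (List.rotate_perm _ _).trans ?_
      rw [range'_split n hn]
      exact (mem_Sn.1 hkw.2).append_right [n]
    · intro π hπ
      obtain ⟨hπlen, hp, hsplit⟩ := Sn_rot_facts hn hπ
      simp only [Finset.mem_product, Finset.mem_range]
      refine ⟨by omega, ?_⟩
      rw [mem_Sn]
      apply (List.perm_append_right_iff [n]).1
      rw [hsplit, ← range'_split n hn]
      exact (List.rotate_perm _ _).trans (mem_Sn.1 hπ)
    · rintro ⟨k, w⟩ hkw
      simp only [Finset.mem_product, Finset.mem_range] at hkw
      obtain ⟨hk, hwSn⟩ := hkw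
      obtain ⟨hwlen, hw⟩ := Sn_facts hwSn hn
      have hlen' : (w ++ [n]).length = n := by
        rw [List.length_append, hwlen]; simp; omega
      have hπlen : ((w ++ [n]).rotate k).length = n := by
        rw [List.length_rotate, hlen']
      have hidx : ((w ++ [n]).rotate k).idxOf n = n - 1 - k := by
        apply indexOf_eq_of (by omega)
        · rw [getD_rotate _ k _ (by omega), hlen',
            show n - 1 - k + k = n - 1 by omega, Nat.mod_eq_of_lt (by omega),
            show n - 1 = w.length by omega]
          exact concat_getD_len w
        · intro j hj
          rw [getD_rotate _ k _ (by omega), hlen', Nat.mod_eq_of_lt (by omega),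
            concat_getD_lt w (by omega)]
          exact Nat.ne_of_lt (entry_bound hw (by omega)).2
      rw [hidx]
      have e1 : n - 1 - k + 1 = n - k := by omega
      have e2 : n - (n - k) = k := by omega
      rw [e1, e2]
      have e3 : (((w ++ [n]).rotate k).rotate (n - k)).dropLast = w := by
        have hrl := List.rotate_length (w ++ [n])
        rw [hlen'] at hrl
        rw [List.rotate_rotate, show k + (n - k) = n by omega, hrl, List.dropLast_concat]
      rw [e3]
    · intro π hπ
      obtain ⟨hπlen, hp, hsplit⟩ := Sn_rot_facts hn hπ
      simp only
      rw [hsplit, List.rotate_rotate, show π.idxOf n + 1 + (n - (π.idxOf n + 1)) = n by omega,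
        ← hπlen, List.rotate_length]
    · rintro ⟨k, w⟩ hkw
      simp only [Finset.mem_product, Finset.mem_range] at hkw
      obtain ⟨hwlen, hw⟩ := Sn_facts hkw.2 hn
      simp only
      rw [cdesN_rotate, cascN_rotate, cdesN_concat w hw, cascN_concat w hw]
  rw [← key, Finset.sum_product]
  have hconst : ∀ x ∈ Finset.range n,
      (∑ y ∈ Sn (n - 1), (X 0 : MvPolynomial (Fin 2) ℚ) ^ desN (x, y).2 * (X 1) ^ ascN (x, y).2)
        = ∑ w ∈ Sn (n - 1), (X 0 : MvPolynomial (Fin 2) ℚ) ^ desN w * (X 1) ^ ascN w :=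
    fun x _ => rfl
  rw [Finset.sum_congr rfl hconst, Finset.sum_const, Finset.card_range]
end

section
/- The exponential generating function of the Eulerian polynomials satisfies Σ_{n≥0} A_n(t) u^n/n! = (1−t)/(1−t·e^{(1−t)u}), as an identity of formal power series in u over the field ℚ(t) (equivalently, (1−t·e^{(1−t)u})·Σ_{n≥0} A_n(t) u^n/n! = 1−t). -/
open scoped Classical
open Finset MvPolynomial

section EulerianAux

/-- descent count of a raw list by recursion -/
def dp : List ℕ → ℕ
  | [] => 0
  | [_] => 0
  | a :: b :: l => (if b < a then 1 else 0) + dp (b :: l)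

lemma dp_cons_cons (a b : ℕ) (l : List ℕ) :
    dp (a :: b :: l) = (if b < a then 1 else 0) + dp (b :: l) := rfl

lemma dcount_eq_dp (l : List ℕ) :
    ((Finset.range (l.length - 1)).filter fun i => l.getD (i+1) 0 < l.getD i 0).card = dp l := by
  induction l with
  | nil => simp [dp]
  | cons a l ih =>
    cases l with
    | nil => simp [dp]
    | cons b l =>
      rw [dp_cons_cons, ← ih]
      rw [Finset.card_filter, Finset.card_filter]
      simp only [List.length_cons, Nat.add_sub_cancel]
      rw [Finset.sum_range_succ' (fun i => if (a :: b :: l).getD (i+1) 0 < (a :: b :: l).getD i 0 then 1 else 0)]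
      simp only [List.getD_cons_succ, List.getD_cons_zero]
      rw [add_comm]

lemma desN_eq_dp (w : List ℕ) : desN w = dp (0 :: (w ++ [0])) := by
  rw [← dcount_eq_dp]
  simp [desN, pad]

lemma dp_insert_middle (m : ℕ) : ∀ (l₁ : List ℕ) (a b : ℕ) (l₂ : List ℕ), a < m → b < m →
    dp (l₁ ++ a :: m :: b :: l₂) = (if b < a then 0 else 1) + dp (l₁ ++ a :: b :: l₂)
  | [], a, b, l₂, ha, hb => by
      simp only [List.nil_append, dp_cons_cons]
      rw [if_neg (by omega), if_pos hb]
      split <;> omega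
  | [c], a, b, l₂, ha, hb => by
      simp only [List.cons_append, List.nil_append, dp_cons_cons]
      rw [if_neg (by omega : ¬ m < a), if_pos hb]
      by_cases hba : b < a <;> simp [hba] <;> ring
  | c :: d :: l₁, a, b, l₂, ha, hb => by
      simp only [List.cons_append, dp_cons_cons]
      have := dp_insert_middle m (d :: l₁) a b l₂ ha hb
      simp only [List.cons_append] at this
      rw [this]; omega

lemma insertIdx_eq_take_drop (a : ℕ) : ∀ (n : ℕ) (l : List ℕ), n ≤ l.length →
    l.insertIdx n a = l.take n ++ a :: l.drop n
  | 0, l, _ => by simp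
  | n+1, [], h => by simp at h
  | n+1, c :: l, h => by
      rw [List.insertIdx_succ_cons]
      simp only [List.take_succ_cons, List.drop_succ_cons, List.cons_append, List.cons.injEq,
        true_and]
      exact insertIdx_eq_take_drop a n l (by simpa using h)

lemma pad_lt (w : List ℕ) (m : ℕ) (hm : ∀ x ∈ w, x < m) (hm0 : 0 < m) (i : ℕ) : pad w i < m := by
  unfold pad
  rcases lt_or_ge i (0 :: (w ++ [0])).length with h | h
  · rw [List.getD_eq_getElem _ _ h]
    have : (0 :: (w ++ [0]))[i] ∈ (0 :: (w ++ [0])) := List.getElem_mem h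
    simp only [List.mem_cons, List.mem_append, List.mem_singleton] at this
    rcases this with h1 | h1 | h1
    · omega
    · exact hm _ h1
    · simp at h1; omega
  · rw [List.getD_eq_default _ _ h]; exact hm0

lemma desN_insertIdx (w : List ℕ) (g m : ℕ) (hg : g ≤ w.length) (hm : ∀ x ∈ w, x < m)
    (hm0 : 0 < m) :
    desN (w.insertIdx g m) = desN w + (if pad w (g+1) < pad w g then 0 else 1) := by
  set p := 0 :: (w ++ [0]) with hp
  have hlp : p.length = w.length + 2 := by simp [hp]
  have hglt : g + 1 < p.length := by omega
  have hgetg : p.getD g 0 = pad w g := rfl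
  have hgetg1 : p.getD (g+1) 0 = pad w (g+1) := rfl
  have hpad_g : pad w g = p[g]'(by omega) := List.getD_eq_getElem p 0 (by omega)
  have hpad_g1 : pad w (g+1) = p[g+1]'hglt := List.getD_eq_getElem p 0 hglt
  -- p decomposes
  have hdropg1 : p.drop (g+1) = pad w (g+1) :: p.drop (g+2) := by
    rw [List.drop_eq_getElem_cons hglt, hpad_g1]
  have hdropg : p.drop g = pad w g :: pad w (g+1) :: p.drop (g+2) := by
    rw [List.drop_eq_getElem_cons (by omega : g < p.length), ← hpad_g, ← hdropg1]
  have hpdecomp : p = p.take g ++ pad w g :: pad w (g+1) :: p.drop (g+2) := by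
    conv_lhs => rw [← List.take_append_drop g p]
    rw [hdropg]
  -- inserted list
  have hins : (0 :: (w.insertIdx g m ++ [0])) =
      p.take g ++ pad w g :: m :: pad w (g+1) :: p.drop (g+2) := by
    have h1 : (0 :: (w.insertIdx g m ++ [0])) = p.insertIdx (g+1) m := by
      rw [insertIdx_eq_take_drop m (g+1) p (by omega), hp]
      simp only [List.take_succ_cons, List.drop_succ_cons]
      rw [List.take_append_of_le_length hg, List.drop_append_of_le_length hg,
        insertIdx_eq_take_drop m g w hg]
      simp
    rw [h1, insertIdx_eq_take_drop m (g+1) p (by omega)]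
    rw [List.take_succ, List.getElem?_eq_getElem (by omega : g < p.length)]
    rw [hdropg1, ← hpad_g]
    simp
  rw [desN_eq_dp, desN_eq_dp, hins, ← hp]
  rw [dp_insert_middle m _ _ _ _ (pad_lt w m hm hm0 g) (pad_lt w m hm hm0 (g+1))]
  rw [← hpdecomp, add_comm]

lemma length_of_mem_Sn {n : ℕ} {w : List ℕ} (h : w ∈ Sn n) : w.length = n := by
  simpa using (mem_Sn.1 h).length_eq

lemma lt_of_mem_Sn {n : ℕ} {w : List ℕ} (h : w ∈ Sn n) {x : ℕ} (hx : x ∈ w) : x < n + 1 := by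
  have := (mem_Sn.1 h).subset hx
  rw [List.mem_range'_1] at this
  omega

lemma range'_perm (n : ℕ) : (List.range' 1 (n+1)).Perm ((n+1) :: List.range' 1 n) := by
  rw [List.range'_1_concat]
  simpa [Nat.add_comm] using List.perm_append_singleton (1+n) (List.range' 1 n)

lemma sum_Sn_succ {M : Type*} [AddCommMonoid M] (f : ℕ → M) (n : ℕ) :
    ∑ p ∈ (Sn n) ×ˢ Finset.range (n+1),
      f (desN p.1 + if pad p.1 (p.2+1) < pad p.1 p.2 then 0 else 1) =
    ∑ w ∈ Sn (n+1), f (desN w) := by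
  have hsucc_mem : ∀ w ∈ Sn (n+1), (n+1) ∈ w := fun w hw => by
    refine (mem_Sn.1 hw).mem_iff.2 ?_
    rw [List.mem_range'_1]; omega
  refine Finset.sum_nbij' (i := fun p => p.1.insertIdx p.2 (n+1))
    (j := fun w => (w.erase (n+1), w.idxOf (n+1))) ?_ ?_ ?_ ?_ ?_
  · rintro ⟨w, g⟩ hp
    rw [Finset.mem_product, Finset.mem_range] at hp
    have hg : g ≤ w.length := by rw [length_of_mem_Sn hp.1]; omega
    exact mem_Sn.2 (((List.perm_insertIdx _ _ hg).trans ((mem_Sn.1 hp.1).cons (n+1))).trans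
      (range'_perm n).symm)
  · intro w hw
    rw [Finset.mem_product, Finset.mem_range]
    constructor
    · refine mem_Sn.2 (List.Perm.cons_inv (a := n+1) ?_)
      exact ((List.perm_cons_erase (hsucc_mem w hw)).symm.trans (mem_Sn.1 hw)).trans
        (range'_perm n)
    · show List.idxOf (n+1) w < n + 1
      have h1 : List.idxOf (n+1) w < w.length :=
        (List.idxOf_lt_length_iff (a := n+1)).2 (hsucc_mem w hw)
      have h2 := length_of_mem_Sn hw
      omega
  · rintro ⟨w, g⟩ hp
    rw [Finset.mem_product, Finset.mem_range] at hp
    have hg : g ≤ w.length := by rw [length_of_mem_Sn hp.1]; omega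
    have hnm : (n+1) ∉ w := fun hmem => by have := lt_of_mem_Sn hp.1 hmem; omega
    have hnt : (n+1) ∉ w.take g := fun hmem => hnm (List.mem_of_mem_take hmem)
    have hlt : (w.take g).length = g := by rw [List.length_take]; omega
    show (((w.insertIdx g (n+1)).erase (n+1)), (w.insertIdx g (n+1)).idxOf (n+1)) = (w, g)
    rw [insertIdx_eq_take_drop _ _ _ hg, List.erase_append_right _ hnt, List.erase_cons_head,
      List.take_append_drop, List.idxOf_append_of_notMem hnt, List.idxOf_cons_self, hlt,
      Nat.add_zero]
  · intro w hw
    obtain ⟨l₁, l₂, hnot, heq, herase⟩ := List.exists_erase_eq (hsucc_mem w hw)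
    show (w.erase (n+1)).insertIdx (w.idxOf (n+1)) (n+1) = w
    rw [heq, List.erase_append_right _ hnot, List.erase_cons_head,
      List.idxOf_append_of_notMem hnot, List.idxOf_cons_self, Nat.add_zero,
      insertIdx_eq_take_drop _ _ _ (by simp), List.take_left' rfl, List.drop_left' rfl]
  · rintro ⟨w, g⟩ hp
    rw [Finset.mem_product, Finset.mem_range] at hp
    have hg : g ≤ w.length := by rw [length_of_mem_Sn hp.1]; omega
    rw [desN_insertIdx w g (n+1) hg (fun x hx => lt_of_mem_Sn hp.1 hx) (by omega)]

noncomputable def aPoly (n : ℕ) : Polynomial ℚ := ∑ w ∈ Sn n, Polynomial.X ^ desN w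

open Polynomial in
lemma innerSumLem (w : List ℕ) (n : ℕ) (hw : w.length = n) :
    ∑ g ∈ Finset.range (n+1),
      (Polynomial.X : ℚ[X]) ^ (desN w + if pad w (g+1) < pad w g then 0 else 1)
    = (desN w : ℚ[X]) * Polynomial.X ^ desN w
      + ((n + 1 - desN w : ℕ) : ℚ[X]) * Polynomial.X ^ (desN w + 1) := by
  have h1 : ∀ g : ℕ, (Polynomial.X : ℚ[X]) ^ (desN w + if pad w (g+1) < pad w g then 0 else 1)
      = if pad w (g+1) < pad w g then Polynomial.X ^ desN w else Polynomial.X ^ (desN w + 1) := by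
    intro g; split <;> simp
  simp_rw [h1]
  rw [Finset.sum_ite, Finset.sum_const, Finset.sum_const]
  have hcard : ((Finset.range (n+1)).filter fun g => pad w (g+1) < pad w g).card = desN w := by
    rw [desN, hw]
  have hcard2 : ((Finset.range (n+1)).filter fun g => ¬ pad w (g+1) < pad w g).card
      = n + 1 - desN w := by
    have := Finset.card_filter_add_card_filter_not (s := Finset.range (n+1))
      (p := fun g => pad w (g+1) < pad w g)
    rw [Finset.card_range] at this
    omega
  rw [hcard, hcard2, nsmul_eq_mul, nsmul_eq_mul]

open Polynomial in
lemma aPoly_succ (n : ℕ) :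
    aPoly (n+1) = Polynomial.X * (1 - Polynomial.X) * (aPoly n).derivative
      + ((n+1 : ℕ) : ℚ[X]) * Polynomial.X * aPoly n := by
  rw [show aPoly (n+1) = ∑ w ∈ Sn (n+1), Polynomial.X ^ desN w from rfl,
    ← sum_Sn_succ (fun d => (Polynomial.X : ℚ[X]) ^ d) n, Finset.sum_product]
  rw [aPoly, map_sum, Finset.mul_sum, Finset.mul_sum, ← Finset.sum_add_distrib]
  refine Finset.sum_congr rfl fun w hw => ?_
  show ∑ g ∈ Finset.range (n+1),
      (Polynomial.X : ℚ[X]) ^ (desN w + if pad w (g+1) < pad w g then 0 else 1) = _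
  rw [innerSumLem w n (length_of_mem_Sn hw), derivative_X_pow]
  rcases Nat.eq_zero_or_pos (desN w) with hd | hd
  · rw [hd]; push_cast; simp
  · have h2 : (Polynomial.X : ℚ[X]) ^ (desN w - 1) * Polynomial.X = Polynomial.X ^ desN w := by
      rw [← pow_succ]; congr 1; omega
    have h3 : ((n + 1 - desN w : ℕ) : ℚ[X]) = ((n+1 : ℕ) : ℚ[X]) - (desN w : ℚ[X]) := by
      have hle : desN w ≤ n + 1 := by
        rw [desN, length_of_mem_Sn hw]
        exact (Finset.card_filter_le _ _).trans (by rw [Finset.card_range])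
      push_cast [Nat.cast_sub hle]; ring
    rw [h3]
    calc (desN w : ℚ[X]) * Polynomial.X ^ desN w
        + (((n+1:ℕ):ℚ[X]) - (desN w : ℚ[X])) * Polynomial.X ^ (desN w + 1)
        = (desN w : ℚ[X]) * (Polynomial.X ^ (desN w - 1) * Polynomial.X)
          + (((n+1:ℕ):ℚ[X]) - (desN w : ℚ[X]))
            * ((Polynomial.X ^ (desN w - 1) * Polynomial.X) * Polynomial.X) := by
          rw [h2]; ring
      _ = _ := by rw [C_eq_natCast, ← h2]; ring

noncomputable def SP (n : ℕ) : Polynomial ℚ :=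
  ∑ j ∈ Finset.range (n+1),
    ((n.choose j : ℕ) : Polynomial ℚ) * (1 - Polynomial.X) ^ j * aPoly (n - j)

noncomputable def TP (n : ℕ) : Polynomial ℚ :=
  ∑ j ∈ Finset.range (n+1),
    ((n.choose j : ℕ) : Polynomial ℚ) * (1 - Polynomial.X) ^ j * aPoly (n - j + 1)

open Polynomial in
lemma E1 (n : ℕ) : SP (n+1) = TP n + (1 - Polynomial.X) * SP n := by
  rw [SP, Finset.sum_range_succ']
  have hf : ∀ i ∈ Finset.range (n+1),
      (((n+1).choose (i+1) : ℕ) : ℚ[X]) * (1 - Polynomial.X) ^ (i+1) * aPoly (n + 1 - (i+1))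
      = ((n.choose i : ℕ) : ℚ[X]) * (1 - Polynomial.X) ^ (i+1) * aPoly (n - i)
        + ((n.choose (i+1) : ℕ) : ℚ[X]) * (1 - Polynomial.X) ^ (i+1) * aPoly (n - i) := by
    intro i _
    rw [Nat.choose_succ_succ, Nat.succ_sub_succ]
    push_cast
    ring
  rw [Finset.sum_congr rfl hf, Finset.sum_add_distrib]
  have h2 : ∑ i ∈ Finset.range (n+1),
      ((n.choose i : ℕ) : ℚ[X]) * (1 - Polynomial.X) ^ (i+1) * aPoly (n - i)
      = (1 - Polynomial.X) * SP n := by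
    rw [SP, Finset.mul_sum]
    exact Finset.sum_congr rfl fun i _ => by ring
  have h3 : ∑ i ∈ Finset.range (n+1),
      ((n.choose (i+1) : ℕ) : ℚ[X]) * (1 - Polynomial.X) ^ (i+1) * aPoly (n - i)
      + (((n+1).choose 0 : ℕ) : ℚ[X]) * (1 - Polynomial.X) ^ 0 * aPoly (n + 1 - 0)
      = TP n := by
    have hL : ∑ i ∈ Finset.range (n+1),
        ((n.choose (i+1) : ℕ) : ℚ[X]) * (1 - Polynomial.X) ^ (i+1) * aPoly (n - i)
        = ∑ i ∈ Finset.range n,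
          ((n.choose (i+1) : ℕ) : ℚ[X]) * (1 - Polynomial.X) ^ (i+1) * aPoly (n - i) := by
      rw [Finset.sum_range_succ, Nat.choose_succ_self]
      simp
    have hR : TP n = ∑ i ∈ Finset.range n,
        ((n.choose (i+1) : ℕ) : ℚ[X]) * (1 - Polynomial.X) ^ (i+1) * aPoly (n - (i+1) + 1)
        + ((n.choose 0 : ℕ) : ℚ[X]) * (1 - Polynomial.X) ^ 0 * aPoly (n - 0 + 1) := by
      rw [TP, Finset.sum_range_succ']
    have h4 : ∀ i ∈ Finset.range n,
        ((n.choose (i+1) : ℕ) : ℚ[X]) * (1 - Polynomial.X) ^ (i+1) * aPoly (n - (i+1) + 1)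
        = ((n.choose (i+1) : ℕ) : ℚ[X]) * (1 - Polynomial.X) ^ (i+1) * aPoly (n - i) := by
      intro i hi
      rw [Finset.mem_range] at hi
      congr 2
      omega
    rw [hL, hR, Finset.sum_congr rfl h4]
    simp
  linear_combination h2 + h3

open Polynomial in
lemma E2 (n : ℕ) : TP n = Polynomial.X * (1 - Polynomial.X) * (SP n).derivative
    + ((n+1 : ℕ) : ℚ[X]) * Polynomial.X * SP n := by
  rw [SP, TP, map_sum, Finset.mul_sum, Finset.mul_sum, ← Finset.sum_add_distrib]
  refine Finset.sum_congr rfl fun j hj => ?_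
  rw [Finset.mem_range] at hj
  have hj' : j ≤ n := by omega
  rw [derivative_mul, derivative_mul, derivative_natCast, derivative_pow]
  have hrec := aPoly_succ (n - j)
  have hnj : n - j + 1 = (n - j) + 1 := rfl
  rw [hnj, hrec]
  have hd1 : derivative (1 - Polynomial.X : ℚ[X]) = -1 := by
    rw [derivative_sub, derivative_one, derivative_X]; ring
  rw [hd1, C_eq_natCast]
  have hcast : ((n - j + 1 : ℕ) : ℚ[X]) = ((n+1 : ℕ) : ℚ[X]) - ((j:ℕ) : ℚ[X]) := by
    push_cast [Nat.cast_sub hj']; ring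
  rcases Nat.eq_zero_or_pos j with h0 | h0
  · subst h0; push_cast; simp
  · have hpow : (1 - Polynomial.X : ℚ[X]) ^ (j - 1) * (1 - Polynomial.X) = (1 - Polynomial.X) ^ j := by
      rw [← pow_succ]; congr 1; omega
    rw [hcast, ← hpow]
    push_cast
    ring

lemma Sn_zero : Sn 0 = {[]} := by
  ext w; simp [mem_Sn]

lemma Sn_one : Sn 1 = {[1]} := by
  ext w; simp [mem_Sn, List.perm_singleton]

lemma aPoly_zero : aPoly 0 = 1 := by
  rw [aPoly, Sn_zero, Finset.sum_singleton, show desN [] = 0 from rfl, pow_zero]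

lemma aPoly_one : aPoly 1 = Polynomial.X := by
  rw [aPoly, Sn_one, Finset.sum_singleton, show desN [1] = 1 from rfl, pow_one]

open Polynomial in
lemma aPoly_eq : ∀ n : ℕ, aPoly (n+1) = Polynomial.X * SP (n+1) := by
  intro n
  induction n with
  | zero =>
    rw [aPoly_one, SP, Finset.sum_range_succ, Finset.sum_range_one]
    norm_num [aPoly_zero, aPoly_one]
  | succ m ih =>
    have h1 := aPoly_succ (m+1)
    have h3 : (aPoly (m+1)).derivative = SP (m+1) + Polynomial.X * (SP (m+1)).derivative := by
      rw [ih, derivative_mul, derivative_X, one_mul]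
    have h4 := E1 (m+1)
    have h5 := E2 (m+1)
    linear_combination h1 + Polynomial.X * (1 - Polynomial.X) * h3
      + ((m+1+1 : ℕ) : ℚ[X]) * Polynomial.X * ih - Polynomial.X * h4 - Polynomial.X * h5

noncomputable def AR (k : ℕ) : RatFunc ℚ := ∑ w ∈ Sn k, (RatFunc.X : RatFunc ℚ) ^ desN w

lemma AR_eq (k : ℕ) : AR k = algebraMap (Polynomial ℚ) (RatFunc ℚ) (aPoly k) := by
  rw [AR, aPoly, map_sum]
  exact Finset.sum_congr rfl fun w _ => by rw [map_pow, RatFunc.algebraMap_X]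

lemma AR_zero : AR 0 = 1 := by rw [AR_eq, aPoly_zero, map_one]

lemma AR_key (n : ℕ) : AR (n+1) = RatFunc.X * ∑ j ∈ Finset.range (n+2),
    (((n+1).choose j : ℕ) : RatFunc ℚ) * (1 - RatFunc.X) ^ j * AR (n+1-j) := by
  rw [AR_eq, aPoly_eq n, map_mul, RatFunc.algebraMap_X, SP,
    map_sum (algebraMap (Polynomial ℚ) (RatFunc ℚ)) _ (Finset.range (n+2))]
  congr 1
  refine Finset.sum_congr rfl fun j _ => ?_
  rw [map_mul, map_mul, map_pow, map_natCast, map_sub, map_one, RatFunc.algebraMap_X, ← AR_eq]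

lemma fact_inv_eq (n k : ℕ) (hk : k ≤ n) :
    ((k.factorial : RatFunc ℚ))⁻¹ * (((n-k).factorial : RatFunc ℚ))⁻¹
    = ((n.factorial : RatFunc ℚ))⁻¹ * ((n.choose k : ℕ) : RatFunc ℚ) := by
  have h := Nat.choose_mul_factorial_mul_factorial hk
  have h2 : ((n.choose k : ℕ) : RatFunc ℚ) * (k.factorial : RatFunc ℚ)
      * (((n-k).factorial : RatFunc ℚ)) = (n.factorial : RatFunc ℚ) := by
    exact_mod_cast congrArg (fun m : ℕ => (m : RatFunc ℚ)) h
  haveI : CharZero (RatFunc ℚ) :=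
    charZero_of_injective_algebraMap (algebraMap ℚ (RatFunc ℚ)).injective
  have hk1 : (k.factorial : RatFunc ℚ) ≠ 0 := Nat.cast_ne_zero.2 k.factorial_ne_zero
  have hk2 : (((n-k).factorial : RatFunc ℚ)) ≠ 0 := Nat.cast_ne_zero.2 (n-k).factorial_ne_zero
  have hk3 : (n.factorial : RatFunc ℚ) ≠ 0 := Nat.cast_ne_zero.2 n.factorial_ne_zero
  field_simp
  linear_combination -h2


end EulerianAux

/-- `(1 − t·e^{(1−t)u}) · Σ_{n≥0} A_n(t) uⁿ/n! = 1 − t` over `ℚ(t)`. -/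
theorem stmt5 :
    (1 - PowerSeries.C (R := RatFunc ℚ) RatFunc.X *
        PowerSeries.mk (fun j => (j.factorial : RatFunc ℚ)⁻¹ * (1 - RatFunc.X) ^ j)) *
      PowerSeries.mk (fun j => (j.factorial : RatFunc ℚ)⁻¹ *
        ∑ w ∈ Sn j, (RatFunc.X : RatFunc ℚ) ^ desN w) =
    PowerSeries.C (R := RatFunc ℚ) (1 - RatFunc.X) := by
  
  have hARdef : ∀ k : ℕ, (∑ w ∈ Sn k, (RatFunc.X : RatFunc ℚ) ^ desN w) = AR k := fun _ => rfl
  ext n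
  rw [sub_mul, one_mul, map_sub, mul_assoc, PowerSeries.coeff_C_mul, PowerSeries.coeff_mul,
    PowerSeries.coeff_C]
  simp only [PowerSeries.coeff_mk, hARdef]
  cases n with
  | zero =>
    rw [Finset.Nat.antidiagonal_zero]
    simp [AR_zero]
  | succ m =>
    rw [if_neg (Nat.succ_ne_zero m), Finset.Nat.sum_antidiagonal_eq_sum_range_succ_mk]
    show ((m+1).factorial : RatFunc ℚ)⁻¹ * AR (m+1)
        - RatFunc.X * ∑ k ∈ Finset.range (m+2),
            (k.factorial : RatFunc ℚ)⁻¹ * (1 - RatFunc.X) ^ k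
              * (((m+1-k).factorial : RatFunc ℚ)⁻¹ * AR (m+1-k)) = 0
    have hterm : ∀ k ∈ Finset.range (m+2),
        (k.factorial : RatFunc ℚ)⁻¹ * (1 - RatFunc.X) ^ k
          * (((m+1-k).factorial : RatFunc ℚ)⁻¹ * AR (m+1-k))
        = ((m+1).factorial : RatFunc ℚ)⁻¹
          * ((((m+1).choose k : ℕ) : RatFunc ℚ) * (1 - RatFunc.X) ^ k * AR (m+1-k)) := by
      intro k hk
      rw [Finset.mem_range] at hk
      have hfie := fact_inv_eq (m+1) k (by omega)
      calc (k.factorial : RatFunc ℚ)⁻¹ * (1 - RatFunc.X) ^ k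
          * (((m+1-k).factorial : RatFunc ℚ)⁻¹ * AR (m+1-k))
          = ((k.factorial : RatFunc ℚ)⁻¹ * ((m+1-k).factorial : RatFunc ℚ)⁻¹)
            * ((1 - RatFunc.X) ^ k * AR (m+1-k)) := by ring
        _ = _ := by rw [hfie]; ring
    rw [Finset.sum_congr rfl hterm, ← Finset.mul_sum, ← mul_assoc,
      mul_comm RatFunc.X (((m+1).factorial : RatFunc ℚ)⁻¹), mul_assoc, ← AR_key m]
    ring
end
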